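/- arXiv:1709.04104 — 2 statements merged into one kernel-verified Lean document; each statement's English description precedes it below -/
import Mathlib

section
/- For all real numbers N ≥ 1, the partial sum U_N = ∑_{n=1}^{N} u_n satisfies U_N ∈ {-2, -1, 0} and U_N ≡ N (mod 2). -/
open Filter Finset Topology

/-- The Thue–Morse sequence with values `±1`: `u n = (-1)^(s₂ n)` where `s₂ n`
is the sum of the binary digits of `n`. -/
def u (n : ℕ) : ℤ := (-1) ^ (Nat.digits 2 n).sum

lemma u_even (k : ℕ) : u (2 * k) = u k := by
  rcases Nat.eq_zero_or_pos k with rfl | hk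
  · rfl
  · unfold u
    rw [Nat.digits_def' (by norm_num : (1:ℕ) < 2) (by omega)]
    have h1 : (2 * k) % 2 = 0 := by omega
    have h2 : (2 * k) / 2 = k := by omega
    rw [h1, h2]
    simp

lemma u_odd (k : ℕ) : u (2 * k + 1) = - u k := by
  unfold u
  rw [Nat.digits_def' (by norm_num : (1:ℕ) < 2) (by omega)]
  have h1 : (2 * k + 1) % 2 = 1 := by omega
  have h2 : (2 * k + 1) / 2 = k := by omega
  rw [h1, h2]
  simp [pow_add, pow_succ]

lemma u_pm (k : ℕ) : u k = 1 ∨ u k = -1 := by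
  unfold u
  rcases Nat.even_or_odd (Nat.digits 2 k).sum with h | h
  · left; exact h.neg_one_pow
  · right; exact h.neg_one_pow

lemma S0 : ∀ m : ℕ, ∑ n ∈ Finset.range (2 * m), u n = 0 := by
  intro m
  induction m with
  | zero => simp
  | succ m ih =>
    have h : 2 * (m + 1) = 2 * m + 1 + 1 := by ring
    rw [h, Finset.sum_range_succ, Finset.sum_range_succ, ih, u_even, u_odd]
    ring

/-- For every `N ≥ 1`, the partial sum `U_N = ∑_{n=1}^{N} u_n` lies in
`{-2, -1, 0}` and satisfies `U_N ≡ N (mod 2)`. -/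
theorem stmt_3 (N : ℕ) (hN : 1 ≤ N) :
    (∑ n ∈ Finset.Icc 1 N, u n) ∈ ({-2, -1, 0} : Set ℤ) ∧
      (∑ n ∈ Finset.Icc 1 N, u n) ≡ (N : ℤ) [ZMOD 2] := by
  have hins : Finset.range (N + 1) = insert 0 (Finset.Icc 1 N) := by
    ext x; simp; omega
  have h0 : (0 : ℕ) ∉ Finset.Icc 1 N := by simp
  have key : ∑ n ∈ Finset.Icc 1 N, u n = (∑ n ∈ Finset.range (N + 1), u n) - 1 := by
    rw [hins, Finset.sum_insert h0]
    have : u 0 = 1 := by simp [u]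
    rw [this]; ring
  rcases Nat.even_or_odd N with ⟨m, hm⟩ | ⟨m, hm⟩
  · -- N = 2m, m ≥ 1
    have hNm : N = 2 * m := by omega
    have hsum : ∑ n ∈ Finset.range (N + 1), u n = u m := by
      rw [hNm, Finset.sum_range_succ, S0, u_even, zero_add]
    rw [key, hsum]
    rcases u_pm m with h | h <;> rw [h]
    · refine ⟨by right; right; rfl, ?_⟩
      show (1 - 1) % 2 = (N : ℤ) % 2
      omega
    · refine ⟨by left; norm_num, ?_⟩
      show (-1 - 1 : ℤ) % 2 = (N : ℤ) % 2
      omega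
  · -- N = 2m+1
    have hNm : N = 2 * m + 1 := by omega
    have hsum : ∑ n ∈ Finset.range (N + 1), u n = 0 := by
      have : N + 1 = 2 * (m + 1) := by omega
      rw [this, S0]
    rw [key, hsum]
    refine ⟨by right; left; norm_num, ?_⟩
    show (0 - 1 : ℤ) % 2 = (N : ℤ) % 2
    omega
end

section
/- For all real b, c > 0, the partial products ∏_{n=0}^{N} [((n+b)(n+(b+1)/2)(n+c/2)) / ((n+c)(n+(c+1)/2)(n+b/2))]^{u_n} converge as N → ∞ to 1. -/
open Filter Finset Topology

lemma u_two_mul (m : ℕ) : u (2 * m) = u m := by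
  rcases Nat.eq_zero_or_pos m with rfl | hm
  · rfl
  · unfold u
    rw [Nat.digits_def' (by norm_num : 1 < 2) (by omega)]
    simp [Nat.mul_div_cancel_left, Nat.mul_mod_right]

lemma u_two_mul_add_one (m : ℕ) : u (2 * m + 1) = - u m := by
  unfold u
  rw [Nat.digits_def' (by norm_num : 1 < 2) (by omega)]
  have h1 : (2 * m + 1) % 2 = 1 := by omega
  have h2 : (2 * m + 1) / 2 = m := by omega
  rw [h1, h2]
  simp [pow_succ, pow_add, mul_comm]

lemma sum_u_two_mul (M : ℕ) : ∑ n ∈ Finset.range (2 * M), ((u n : ℝ)) = 0 := by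
  induction M with
  | zero => simp
  | succ M ih =>
    have : 2 * (M + 1) = (2 * M + 1) + 1 := by ring
    rw [this, Finset.sum_range_succ, Finset.sum_range_succ, ih,
      u_two_mul_add_one, u_two_mul]
    push_cast
    ring

lemma abs_u (n : ℕ) : |(u n : ℝ)| = 1 := by
  unfold u
  push_cast
  rw [abs_pow, abs_neg, abs_one, one_pow]

lemma sum_u_bound (N : ℕ) : ‖∑ n ∈ Finset.range N, ((u n : ℝ))‖ ≤ 1 := by
  rcases Nat.even_or_odd N with ⟨M, hM⟩ | ⟨M, hM⟩
  · subst hM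
    rw [show M + M = 2 * M by ring, sum_u_two_mul]
    simp
  · subst hM
    rw [Finset.sum_range_succ, sum_u_two_mul, zero_add, Real.norm_eq_abs, abs_u]

/-- Partial sums of `u n * (log (n+x) - log (n+y))`. -/
noncomputable def A (x y : ℝ) (N : ℕ) : ℝ :=
  ∑ n ∈ Finset.range N, (u n : ℝ) * (Real.log (n + x) - Real.log (n + y))

lemma A_neg (x y : ℝ) (N : ℕ) : A y x N = - A x y N := by
  unfold A
  rw [← Finset.sum_neg_distrib]
  exact Finset.sum_congr rfl fun n _ => by ring

lemma tendsto_ratio (x y : ℝ) (hx : 0 < x) :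
    Tendsto (fun n : ℕ => ((n : ℝ) + y) / ((n : ℝ) + x)) atTop (𝓝 1) := by
  have htop : Tendsto (fun n : ℕ => (n : ℝ) + x) atTop atTop :=
    tendsto_atTop_add_const_right _ x tendsto_natCast_atTop_atTop
  have h0 : Tendsto (fun n : ℕ => (y - x) / ((n : ℝ) + x)) atTop (𝓝 0) :=
    Tendsto.div_atTop tendsto_const_nhds htop
  have : Tendsto (fun n : ℕ => 1 + (y - x) / ((n : ℝ) + x)) atTop (𝓝 (1 + 0)) :=
    tendsto_const_nhds.add h0
  rw [add_zero] at this
  refine this.congr' ?_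
  filter_upwards [eventually_ge_atTop 0] with n _
  have hnx : (n : ℝ) + x ≠ 0 := by positivity
  field_simp
  ring

lemma exists_lim_le (x y : ℝ) (hx : 0 < x) (hy : 0 < y) (hxy : x ≤ y) :
    ∃ L, Tendsto (A x y) atTop (𝓝 L) := by
  set f : ℕ → ℝ := fun n => Real.log ((n : ℝ) + y) - Real.log ((n : ℝ) + x) with hf
  have hfa : Antitone f := by
    intro m n hmn
    have hm : (m : ℝ) ≤ (n : ℝ) := by exact_mod_cast hmn
    have h1 : (0:ℝ) < (m : ℝ) + x := by positivity
    have h2 : (0:ℝ) < (m : ℝ) + y := by positivity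
    have h3 : (0:ℝ) < (n : ℝ) + x := by positivity
    have h4 : (0:ℝ) < (n : ℝ) + y := by positivity
    have key : ((n : ℝ) + y) * ((m : ℝ) + x) ≤ ((m : ℝ) + y) * ((n : ℝ) + x) := by
      nlinarith
    have := Real.log_le_log (by positivity) key
    rw [Real.log_mul (by positivity) (by positivity),
      Real.log_mul (by positivity) (by positivity)] at this
    simp only [hf]
    linarith
  have hf0 : Tendsto f atTop (𝓝 0) := by
    have : Tendsto (fun n : ℕ => Real.log (((n : ℝ) + y) / ((n : ℝ) + x))) atTop
        (𝓝 (Real.log 1)) :=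
      (Real.continuousAt_log one_ne_zero).tendsto.comp (tendsto_ratio x y hx)
    rw [Real.log_one] at this
    refine this.congr fun n => ?_
    rw [Real.log_div (by positivity) (by positivity)]
  have hc : CauchySeq fun N => ∑ n ∈ Finset.range N, f n • ((u n : ℝ)) :=
    hfa.cauchySeq_series_mul_of_tendsto_zero_of_bounded hf0 sum_u_bound
  have heq : A x y = fun N => -(∑ n ∈ Finset.range N, f n • ((u n : ℝ))) := by
    funext N
    unfold A
    rw [← Finset.sum_neg_distrib]
    refine Finset.sum_congr rfl fun n _ => ?_
    simp only [hf, smul_eq_mul]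
    ring
  have hc2 : CauchySeq (A x y) := by
    rw [heq]
    exact hc.neg
  exact cauchySeq_tendsto_of_complete hc2

lemma exists_lim (x y : ℝ) (hx : 0 < x) (hy : 0 < y) :
    ∃ L, Tendsto (A x y) atTop (𝓝 L) := by
  rcases le_total x y with h | h
  · exact exists_lim_le x y hx hy h
  · obtain ⟨L, hL⟩ := exists_lim_le y x hy hx h
    exact ⟨-L, hL.neg.congr fun N => (A_neg y x N).symm⟩

lemma A_succ (x y : ℝ) (N : ℕ) : A x y (N + 1)
    = A x y N + (u N : ℝ) * (Real.log (N + x) - Real.log (N + y)) :=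
  Finset.sum_range_succ _ _

lemma A_double (x y : ℝ) (hx : 0 < x) (hy : 0 < y) (M : ℕ) :
    A x y (2 * M) = A (x / 2) (y / 2) M + A ((y + 1) / 2) ((x + 1) / 2) M := by
  have key : ∀ z : ℝ, 0 < z → ∀ n : ℝ, 0 ≤ n →
      Real.log (2 * n + z) = Real.log 2 + Real.log (n + z / 2) := by
    intro z hz n hn
    rw [show 2 * n + z = 2 * (n + z / 2) by ring,
      Real.log_mul two_ne_zero (by positivity)]
  induction M with
  | zero => simp [A]
  | succ M ih =>
    have hM : (0:ℝ) ≤ (M : ℝ) := Nat.cast_nonneg M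
    have h2M : 2 * (M + 1) = (2 * M + 1) + 1 := by ring
    rw [h2M, A_succ, A_succ, A_succ, A_succ, ih, u_two_mul_add_one, u_two_mul]
    have e1 : Real.log (((2 * M : ℕ) : ℝ) + x) - Real.log (((2 * M : ℕ) : ℝ) + y)
        = Real.log ((M : ℝ) + x / 2) - Real.log ((M : ℝ) + y / 2) := by
      push_cast
      rw [key x hx M hM, key y hy M hM]
      ring
    have e2 : Real.log (((2 * M + 1 : ℕ) : ℝ) + x) - Real.log (((2 * M + 1 : ℕ) : ℝ) + y)
        = Real.log ((M : ℝ) + (x + 1) / 2) - Real.log ((M : ℝ) + (y + 1) / 2) := by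
      push_cast
      rw [show 2 * (M:ℝ) + 1 + x = 2 * (M:ℝ) + (x + 1) by ring,
        show 2 * (M:ℝ) + 1 + y = 2 * (M:ℝ) + (y + 1) by ring,
        key (x + 1) (by positivity) M hM, key (y + 1) (by positivity) M hM]
      ring
    rw [e1, e2]
    push_cast
    ring

/-- For `b, c > 0`, the partial products
`∏_{n=0}^{N} [((n+b)(n+(b+1)/2)(n+c/2)) / ((n+c)(n+(c+1)/2)(n+b/2))]^{u_n}`
converge to `1`. -/
theorem stmt_15 (b c : ℝ) (hb : 0 < b) (hc : 0 < c) :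
    Tendsto (fun N : ℕ => ∏ n ∈ Finset.range (N + 1),
      ((((n : ℝ) + b) * ((n : ℝ) + (b + 1) / 2) * ((n : ℝ) + c / 2)) /
        (((n : ℝ) + c) * ((n : ℝ) + (c + 1) / 2) * ((n : ℝ) + b / 2))) ^ (u n))
      atTop (𝓝 1) := by
  obtain ⟨L1, h1⟩ := exists_lim b c hb hc
  obtain ⟨L4, h4⟩ := exists_lim (b / 2) (c / 2) (by positivity) (by positivity)
  obtain ⟨L5, h5⟩ := exists_lim ((c + 1) / 2) ((b + 1) / 2) (by positivity) (by positivity)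
  have hdouble : Tendsto (fun M : ℕ => A b c (2 * M)) atTop (𝓝 L1) :=
    h1.comp (tendsto_atTop_mono (fun n => by simp only [id_eq]; omega) tendsto_id)
  have hdouble' : Tendsto (fun M : ℕ => A (b / 2) (c / 2) M + A ((c + 1) / 2) ((b + 1) / 2) M)
      atTop (𝓝 L1) := hdouble.congr fun M => A_double b c hb hc M
  have hL : L1 = L4 + L5 := tendsto_nhds_unique hdouble' (h4.add h5)
  have h2 : Tendsto (A ((b + 1) / 2) ((c + 1) / 2)) atTop (𝓝 (-L5)) :=
    h5.neg.congr fun N => (A_neg ((c + 1) / 2) ((b + 1) / 2) N).symm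
  have h3 : Tendsto (A (c / 2) (b / 2)) atTop (𝓝 (-L4)) :=
    h4.neg.congr fun N => (A_neg (b / 2) (c / 2) N).symm
  have hS : Tendsto (fun N : ℕ => A b c N + A ((b + 1) / 2) ((c + 1) / 2) N + A (c / 2) (b / 2) N)
      atTop (𝓝 0) := by
    have ht := (h1.add h2).add h3
    have : L1 + -L5 + -L4 = 0 := by rw [hL]; ring
    rwa [this] at ht
  set r : ℕ → ℝ := fun n =>
    (((n : ℝ) + b) * ((n : ℝ) + (b + 1) / 2) * ((n : ℝ) + c / 2)) /
      (((n : ℝ) + c) * ((n : ℝ) + (c + 1) / 2) * ((n : ℝ) + b / 2)) with hr_def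
  have hr : ∀ n : ℕ, 0 < r n := fun n => by
    simp only [hr_def]
    positivity
  have hlog : ∀ n : ℕ, (u n : ℝ) * Real.log (r n) =
      (u n : ℝ) * (Real.log (n + b) - Real.log (n + c))
      + (u n : ℝ) * (Real.log (n + (b + 1) / 2) - Real.log (n + (c + 1) / 2))
      + (u n : ℝ) * (Real.log (n + c / 2) - Real.log (n + b / 2)) := by
    intro n
    simp only [hr_def]
    rw [Real.log_div (by positivity) (by positivity),
      Real.log_mul (by positivity) (by positivity),
      Real.log_mul (by positivity) (by positivity),
      Real.log_mul (by positivity) (by positivity),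
      Real.log_mul (by positivity) (by positivity)]
    ring
  have hsum : ∀ N : ℕ, (∑ n ∈ Finset.range N, (u n : ℝ) * Real.log (r n))
      = A b c N + A ((b + 1) / 2) ((c + 1) / 2) N + A (c / 2) (b / 2) N := by
    intro N
    unfold A
    rw [← Finset.sum_add_distrib, ← Finset.sum_add_distrib]
    exact Finset.sum_congr rfl fun n _ => hlog n
  have hprod : ∀ N : ℕ, (∏ n ∈ Finset.range (N + 1), (r n) ^ (u n))
      = Real.exp (∑ n ∈ Finset.range (N + 1), (u n : ℝ) * Real.log (r n)) := by
    intro N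
    rw [Real.exp_sum]
    refine Finset.prod_congr rfl fun n _ => ?_
    rw [← Real.log_zpow, Real.exp_log (zpow_pos (hr n) _)]
  have hfin : Tendsto (fun N : ℕ => Real.exp
      (A b c (N + 1) + A ((b + 1) / 2) ((c + 1) / 2) (N + 1) + A (c / 2) (b / 2) (N + 1)))
      atTop (𝓝 1) := by
    have := (Real.continuous_exp.tendsto 0).comp (hS.comp (tendsto_add_atTop_nat 1))
    rwa [Real.exp_zero] at this
  refine hfin.congr fun N => ?_
  rw [← hsum, ← hprod]
end
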